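/- arXiv:1204.3249 — 8 statements merged into one kernel-verified Lean document; each statement's English description precedes it below -/
import Mathlib

section
/- Splitting bisimilarity is an equivalence relation on the set of conditional transition systems: it is reflexive, symmetric, and transitive. -/
/-- A conditional transition system over a (complete) Boolean algebra `C` of
conditions and a set `Act` of actions: transition relations labelled by a
condition and an action, termination relations labelled by a condition, and an
initial state. -/
structure CTS (C : Type*) (Act : Type*) (S : Type*) where
  tr : C → Act → S → S → Prop
  term : C → S → Prop
  init : S

/-- `B` is a splitting bisimulation between `T₁` and `T₂`. -/
def IsSB {C Act S₁ S₂ : Type*} [CompleteBooleanAlgebra C]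
    (T₁ : CTS C Act S₁) (T₂ : CTS C Act S₂) (B : S₁ → S₂ → Prop) : Prop :=
  B T₁.init T₂.init ∧
  ∀ s₁ s₂, B s₁ s₂ →
    (∀ α a s₁', T₁.tr α a s₁ s₁' → ∃ CS : Set (C × S₂),
      α ≤ sSup (Prod.fst '' CS) ∧ ∀ p ∈ CS, T₂.tr p.1 a s₂ p.2 ∧ B s₁' p.2) ∧
    (∀ α a s₂', T₂.tr α a s₂ s₂' → ∃ CS : Set (C × S₁),
      α ≤ sSup (Prod.fst '' CS) ∧ ∀ p ∈ CS, T₁.tr p.1 a s₁ p.2 ∧ B p.2 s₂') ∧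
    (∀ α, T₁.term α s₁ → ∃ Cs : Set C,
      α ≤ sSup Cs ∧ ∀ α' ∈ Cs, T₂.term α' s₂) ∧
    (∀ α, T₂.term α s₂ → ∃ Cs : Set C,
      α ≤ sSup Cs ∧ ∀ α' ∈ Cs, T₁.term α' s₁)

/-- Two conditional transition systems are splitting bisimilar if there exists
a splitting bisimulation between them. -/
def SBisim {C Act S₁ S₂ : Type*} [CompleteBooleanAlgebra C]
    (T₁ : CTS C Act S₁) (T₂ : CTS C Act S₂) : Prop :=
  ∃ B, IsSB T₁ T₂ B

/-- Splitting bisimilarity is an equivalence relation on conditional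
transition systems: reflexive, symmetric and transitive. -/
theorem sbisim_equivalence (C Act S : Type*) [CompleteBooleanAlgebra C] :
    Equivalence (fun T₁ T₂ : CTS C Act S => SBisim T₁ T₂) := by
  constructor
  · -- reflexivity
    intro T
    refine ⟨Eq, rfl, fun s₁ s₂ h => ?_⟩
    subst h
    refine ⟨?_, ?_, ?_, ?_⟩
    · intro α a s₁' h
      exact ⟨{(α, s₁')}, by simp, by simp [h]⟩
    · intro α a s₂' h
      exact ⟨{(α, s₂')}, by simp, by simp [h]⟩
    · intro α h
      exact ⟨{α}, by simp, by simp [h]⟩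
    · intro α h
      exact ⟨{α}, by simp, by simp [h]⟩
  · -- symmetry
    rintro T₁ T₂ ⟨B, hinit, h⟩
    refine ⟨fun s₂ s₁ => B s₁ s₂, hinit, fun s₂ s₁ hB => ?_⟩
    obtain ⟨h1, h2, h3, h4⟩ := h s₁ s₂ hB
    exact ⟨h2, h1, h4, h3⟩
  · -- transitivity
    rintro T₁ T₂ T₃ ⟨B₁, hi₁, h₁⟩ ⟨B₂, hi₂, h₂⟩
    refine ⟨fun s₁ s₃ => ∃ s₂, B₁ s₁ s₂ ∧ B₂ s₂ s₃, ⟨T₂.init, hi₁, hi₂⟩, ?_⟩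
    rintro s₁ s₃ ⟨s₂, hB₁, hB₂⟩
    obtain ⟨f1, b1, t1, u1⟩ := h₁ s₁ s₂ hB₁
    obtain ⟨f2, b2, t2, u2⟩ := h₂ s₂ s₃ hB₂
    refine ⟨?_, ?_, ?_, ?_⟩
    · intro α a s₁' htr
      obtain ⟨CS₂, hle, hCS₂⟩ := f1 α a s₁' htr
      choose F hF₁ hF₂ using fun (p : C × S) (hp : p ∈ CS₂) =>
        f2 p.1 a p.2 (hCS₂ p hp).1
      refine ⟨⋃ p ∈ CS₂, F p ‹_›, ?_, ?_⟩
      · refine hle.trans (sSup_le ?_)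
        rintro b ⟨p, hp, rfl⟩
        refine (hF₁ p hp).trans (sSup_le_sSup (Set.image_mono ?_))
        exact Set.subset_iUnion₂ p hp
      · rintro q hq
        simp only [Set.mem_iUnion] at hq
        obtain ⟨p, hp, hq⟩ := hq
        obtain ⟨htr', hB'⟩ := hF₂ p hp q hq
        exact ⟨htr', p.2, (hCS₂ p hp).2, hB'⟩
    · intro α a s₃' htr
      obtain ⟨CS₂, hle, hCS₂⟩ := b2 α a s₃' htr
      choose F hF₁ hF₂ using fun (p : C × S) (hp : p ∈ CS₂) =>
        b1 p.1 a p.2 (hCS₂ p hp).1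
      refine ⟨⋃ p ∈ CS₂, F p ‹_›, ?_, ?_⟩
      · refine hle.trans (sSup_le ?_)
        rintro b ⟨p, hp, rfl⟩
        refine (hF₁ p hp).trans (sSup_le_sSup (Set.image_mono ?_))
        exact Set.subset_iUnion₂ p hp
      · rintro q hq
        simp only [Set.mem_iUnion] at hq
        obtain ⟨p, hp, hq⟩ := hq
        obtain ⟨htr', hB'⟩ := hF₂ p hp q hq
        exact ⟨htr', p.2, hB', (hCS₂ p hp).2⟩
    · intro α h
      obtain ⟨Cs, hle, hCs⟩ := t1 α h
      choose F hF₁ hF₂ using fun (α' : C) (hα' : α' ∈ Cs) => t2 α' (hCs α' hα')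
      refine ⟨⋃ α' ∈ Cs, F α' ‹_›, ?_, ?_⟩
      · refine hle.trans (sSup_le fun b hb => ?_)
        exact (hF₁ b hb).trans (sSup_le_sSup (Set.subset_iUnion₂ b hb))
      · intro α'' h''
        simp only [Set.mem_iUnion] at h''
        obtain ⟨α', hα', h''⟩ := h''
        exact hF₂ α' hα' α'' h''
    · intro α h
      obtain ⟨Cs, hle, hCs⟩ := u2 α h
      choose F hF₁ hF₂ using fun (α' : C) (hα' : α' ∈ Cs) => u1 α' (hCs α' hα')
      refine ⟨⋃ α' ∈ Cs, F α' ‹_›, ?_, ?_⟩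
      · refine hle.trans (sSup_le fun b hb => ?_)
        exact (hF₁ b hb).trans (sSup_le_sSup (Set.subset_iUnion₂ b hb))
      · intro α'' h''
        simp only [Set.mem_iUnion] at h''
        obtain ⟨α', hα', h''⟩ := h''
        exact hF₂ α' hα' α'' h''
end

section
/- Splitting bisimilarity is a congruence with respect to alternative composition of conditional transition systems: if T₁ is splitting bisimilar to T₁' and T₂ is splitting bisimilar to T₂', then T₁ + T₂ is splitting bisimilar to T₁' + T₂'. -/
/-- Reachability: `Reach T s s'` iff `s'` is reachable from `s` by a sequence
of transitions. -/
def Reach {C Act S : Type*} (T : CTS C Act S) : S → S → Prop :=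
  Relation.ReflTransGen (fun s s' => ∃ α a, T.tr α a s s')

/-- The connected part of a conditional transition system: its states are the
states reachable from the initial state, with transition and termination
relations restricted accordingly. -/
def conn {C Act S : Type*} (T : CTS C Act S) :
    CTS C Act {s : S // Reach T T.init s} where
  tr α a s s' := T.tr α a s.val s'.val
  term α s := T.term α s.val
  init := ⟨T.init, Relation.ReflTransGen.refl⟩

/-- Alternative composition of conditional transition systems (before taking
the connected part): a fresh initial state whose outgoing transitions and
terminations mirror those of the two initial states, with the two systems
placed side by side. -/
def altComp {C Act S₁ S₂ : Type*} (T₁ : CTS C Act S₁) (T₂ : CTS C Act S₂) :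
    CTS C Act (Option (S₁ ⊕ S₂)) where
  tr α a s s' :=
    match s, s' with
    | none, some (Sum.inl t') => T₁.tr α a T₁.init t'
    | none, some (Sum.inr t') => T₂.tr α a T₂.init t'
    | some (Sum.inl t), some (Sum.inl t') => T₁.tr α a t t'
    | some (Sum.inr t), some (Sum.inr t') => T₂.tr α a t t'
    | _, _ => False
  term α s :=
    match s with
    | none => T₁.term α T₁.init ∨ T₂.term α T₂.init
    | some (Sum.inl t) => T₁.term α t
    | some (Sum.inr t) => T₂.term α t
  init := none


section Aux
variable {C Act : Type*} [CompleteBooleanAlgebra C]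

lemma fst_image_map {S S' : Type*} (f : S → S') (CS : Set (C × S)) :
    Prod.fst '' ((fun p : C × S => (p.1, f p.2)) '' CS) = Prod.fst '' CS := by
  rw [Set.image_image]

lemma lift_CS {S' X : Type*} {α : C} {CS : Set (C × S')}
    (f : S' → X) (P : C → S' → Prop) (Q : C → X → Prop)
    (hle : α ≤ sSup (Prod.fst '' CS))
    (hCS : ∀ p ∈ CS, P p.1 p.2)
    (hPQ : ∀ c s, P c s → Q c (f s)) :
    ∃ CS' : Set (C × X), α ≤ sSup (Prod.fst '' CS') ∧ ∀ q ∈ CS', Q q.1 q.2 := by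
  refine ⟨(fun p : C × S' => (p.1, f p.2)) '' CS, ?_, ?_⟩
  · rwa [fst_image_map]
  · rintro q ⟨p, hp, rfl⟩
    exact hPQ p.1 p.2 (hCS p hp)

/-- `conn` preserves splitting bisimulations. -/
lemma connSB {S S' : Type*} {T : CTS C Act S} {T' : CTS C Act S'} {B : S → S' → Prop}
    (h : IsSB T T' B) :
    IsSB (conn T) (conn T') (fun s s' => B s.val s'.val) := by
  obtain ⟨hinit, hstep⟩ := h
  refine ⟨hinit, ?_⟩
  rintro ⟨s₁, hr₁⟩ ⟨s₂, hr₂⟩ hB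
  obtain ⟨hf, hb, ht, ht'⟩ := hstep s₁ s₂ hB
  refine ⟨?_, ?_, ht, ht'⟩
  · rintro α a ⟨s₁', hr₁'⟩ htr
    obtain ⟨CS, hle, hCS⟩ := hf α a s₁' htr
    refine ⟨{q : C × {s // Reach T' T'.init s} | (q.1, q.2.val) ∈ CS}, ?_, ?_⟩
    · refine hle.trans (sSup_le_sSup ?_)
      rintro c ⟨p, hp, rfl⟩
      have hreach : Reach T' T'.init p.2 := hr₂.tail ⟨p.1, a, (hCS p hp).1⟩
      exact ⟨(p.1, ⟨p.2, hreach⟩), hp, rfl⟩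
    · rintro ⟨c, t⟩ hq
      exact hCS (c, t.val) hq
  · rintro α a ⟨s₂', hr₂'⟩ htr
    obtain ⟨CS, hle, hCS⟩ := hb α a s₂' htr
    refine ⟨{q : C × {s // Reach T T.init s} | (q.1, q.2.val) ∈ CS}, ?_, ?_⟩
    · refine hle.trans (sSup_le_sSup ?_)
      rintro c ⟨p, hp, rfl⟩
      have hreach : Reach T T.init p.2 := hr₁.tail ⟨p.1, a, (hCS p hp).1⟩
      exact ⟨(p.1, ⟨p.2, hreach⟩), hp, rfl⟩
    · rintro ⟨c, t⟩ hq
      exact hCS (c, t.val) hq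

/-- The relation on the alternative composition induced by two relations. -/
def altRel {S₁ S₂ S₁' S₂' : Type*} (B₁ : S₁ → S₁' → Prop) (B₂ : S₂ → S₂' → Prop) :
    Option (S₁ ⊕ S₂) → Option (S₁' ⊕ S₂') → Prop
  | none, none => True
  | some (Sum.inl t), some (Sum.inl t') => B₁ t t'
  | some (Sum.inr t), some (Sum.inr t') => B₂ t t'
  | _, _ => False

/-- `altComp` preserves splitting bisimulations. -/
lemma altSB {S₁ S₂ S₁' S₂' : Type*}
    {T₁ : CTS C Act S₁} {T₂ : CTS C Act S₂} {T₁' : CTS C Act S₁'} {T₂' : CTS C Act S₂'}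
    {B₁ : S₁ → S₁' → Prop} {B₂ : S₂ → S₂' → Prop}
    (h₁ : IsSB T₁ T₁' B₁) (h₂ : IsSB T₂ T₂' B₂) :
    IsSB (altComp T₁ T₂) (altComp T₁' T₂') (altRel B₁ B₂) := by
  obtain ⟨hinit₁, hstep₁⟩ := h₁
  obtain ⟨hinit₂, hstep₂⟩ := h₂
  refine ⟨trivial, ?_⟩
  rintro (_ | (t₁ | t₁)) (_ | (t₂ | t₂)) hB <;> try exact hB.elim
  -- case none, none
  · refine ⟨?_, ?_, ?_, ?_⟩
    · rintro α a (_ | (t' | t')) htr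
      · exact absurd htr (by simp [altComp])
      · obtain ⟨hf, _, _, _⟩ := hstep₁ T₁.init T₁'.init hinit₁
        obtain ⟨CS, hle, hCS⟩ := hf α a t' htr
        exact lift_CS (fun s => some (Sum.inl s)) _
          (fun c y => (altComp T₁' T₂').tr c a none y ∧ altRel B₁ B₂ (some (Sum.inl t')) y)
          hle hCS (fun c s hs => hs)
      · obtain ⟨hf, _, _, _⟩ := hstep₂ T₂.init T₂'.init hinit₂
        obtain ⟨CS, hle, hCS⟩ := hf α a t' htr
        exact lift_CS (fun s => some (Sum.inr s)) _
          (fun c y => (altComp T₁' T₂').tr c a none y ∧ altRel B₁ B₂ (some (Sum.inr t')) y)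
          hle hCS (fun c s hs => hs)
    · rintro α a (_ | (t' | t')) htr
      · exact absurd htr (by simp [altComp])
      · obtain ⟨_, hb, _, _⟩ := hstep₁ T₁.init T₁'.init hinit₁
        obtain ⟨CS, hle, hCS⟩ := hb α a t' htr
        exact lift_CS (fun s => some (Sum.inl s)) _
          (fun c y => (altComp T₁ T₂).tr c a none y ∧ altRel B₁ B₂ y (some (Sum.inl t')))
          hle hCS (fun c s hs => hs)
      · obtain ⟨_, hb, _, _⟩ := hstep₂ T₂.init T₂'.init hinit₂
        obtain ⟨CS, hle, hCS⟩ := hb α a t' htr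
        exact lift_CS (fun s => some (Sum.inr s)) _
          (fun c y => (altComp T₁ T₂).tr c a none y ∧ altRel B₁ B₂ y (some (Sum.inr t')))
          hle hCS (fun c s hs => hs)
    · rintro α (hterm | hterm)
      · obtain ⟨_, _, ht, _⟩ := hstep₁ T₁.init T₁'.init hinit₁
        obtain ⟨Cs, hle, hCs⟩ := ht α hterm
        exact ⟨Cs, hle, fun α' hα' => Or.inl (hCs α' hα')⟩
      · obtain ⟨_, _, ht, _⟩ := hstep₂ T₂.init T₂'.init hinit₂
        obtain ⟨Cs, hle, hCs⟩ := ht α hterm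
        exact ⟨Cs, hle, fun α' hα' => Or.inr (hCs α' hα')⟩
    · rintro α (hterm | hterm)
      · obtain ⟨_, _, _, ht⟩ := hstep₁ T₁.init T₁'.init hinit₁
        obtain ⟨Cs, hle, hCs⟩ := ht α hterm
        exact ⟨Cs, hle, fun α' hα' => Or.inl (hCs α' hα')⟩
      · obtain ⟨_, _, _, ht⟩ := hstep₂ T₂.init T₂'.init hinit₂
        obtain ⟨Cs, hle, hCs⟩ := ht α hterm
        exact ⟨Cs, hle, fun α' hα' => Or.inr (hCs α' hα')⟩
  -- case inl, inl
  · obtain ⟨hf, hb, ht, ht'⟩ := hstep₁ t₁ t₂ hB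
    refine ⟨?_, ?_, ht, ht'⟩
    · rintro α a (_ | (t' | t')) htr
      · exact absurd htr (by simp [altComp])
      · obtain ⟨CS, hle, hCS⟩ := hf α a t' htr
        exact lift_CS (fun s => some (Sum.inl s)) _
          (fun c y => (altComp T₁' T₂').tr c a (some (Sum.inl t₂)) y ∧
            altRel B₁ B₂ (some (Sum.inl t')) y)
          hle hCS (fun c s hs => hs)
      · exact absurd htr (by simp [altComp])
    · rintro α a (_ | (t' | t')) htr
      · exact absurd htr (by simp [altComp])
      · obtain ⟨CS, hle, hCS⟩ := hb α a t' htr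
        exact lift_CS (fun s => some (Sum.inl s)) _
          (fun c y => (altComp T₁ T₂).tr c a (some (Sum.inl t₁)) y ∧
            altRel B₁ B₂ y (some (Sum.inl t')))
          hle hCS (fun c s hs => hs)
      · exact absurd htr (by simp [altComp])
  -- case inr, inr
  · obtain ⟨hf, hb, ht, ht'⟩ := hstep₂ t₁ t₂ hB
    refine ⟨?_, ?_, ht, ht'⟩
    · rintro α a (_ | (t' | t')) htr
      · exact absurd htr (by simp [altComp])
      · exact absurd htr (by simp [altComp])
      · obtain ⟨CS, hle, hCS⟩ := hf α a t' htr
        exact lift_CS (fun s => some (Sum.inr s)) _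
          (fun c y => (altComp T₁' T₂').tr c a (some (Sum.inr t₂)) y ∧
            altRel B₁ B₂ (some (Sum.inr t')) y)
          hle hCS (fun c s hs => hs)
    · rintro α a (_ | (t' | t')) htr
      · exact absurd htr (by simp [altComp])
      · exact absurd htr (by simp [altComp])
      · obtain ⟨CS, hle, hCS⟩ := hb α a t' htr
        exact lift_CS (fun s => some (Sum.inr s)) _
          (fun c y => (altComp T₁ T₂).tr c a (some (Sum.inr t₁)) y ∧
            altRel B₁ B₂ y (some (Sum.inr t')))
          hle hCS (fun c s hs => hs)

end Aux

/-- Splitting bisimilarity is a congruence with respect to alternative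
composition: if `T₁ ≈ T₁'` and `T₂ ≈ T₂'` then `T₁ + T₂ ≈ T₁' + T₂'`. -/
theorem sbisim_congr_altComp {C Act S₁ S₂ S₁' S₂' : Type*}
    [CompleteBooleanAlgebra C]
    (T₁ : CTS C Act S₁) (T₂ : CTS C Act S₂)
    (T₁' : CTS C Act S₁') (T₂' : CTS C Act S₂')
    (h₁ : SBisim T₁ T₁') (h₂ : SBisim T₂ T₂') :
    SBisim (conn (altComp T₁ T₂)) (conn (altComp T₁' T₂')) := by
  obtain ⟨B₁, hB₁⟩ := h₁
  obtain ⟨B₂, hB₂⟩ := h₂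
  exact ⟨_, connSB (altSB hB₁ hB₂)⟩
end

section
/- Splitting bisimilarity is a congruence with respect to parallel composition (synchronous merge) of conditional transition systems: if T₁ ≈ T₁' and T₂ ≈ T₂', then T₁ ∥ T₂ ≈ T₁' ∥ T₂'; moreover, the product relation R_∥ = {((s₁,s₂),(s₁',s₂')) : (s₁,s₁') ∈ R₁, (s₂,s₂') ∈ R₂} of witnessing bisimulations R₁, R₂ is itself a witnessing splitting bisimulation. -/
/-- Parallel composition (synchronous merge) of conditional transition systems
with respect to a communication function `γ` on `Act_δ = Option Act`
(`none` playing the role of `δ`). -/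
def parComp {C Act S₁ S₂ : Type*} [CompleteBooleanAlgebra C]
    (γ : Option Act → Option Act → Option Act)
    (T₁ : CTS C Act S₁) (T₂ : CTS C Act S₂) : CTS C Act (S₁ × S₂) where
  tr α a s s' :=
    (T₁.tr α a s.1 s'.1 ∧ s'.2 = s.2) ∨
    (s'.1 = s.1 ∧ T₂.tr α a s.2 s'.2) ∨
    (∃ α' β' a' b', T₁.tr α' a' s.1 s'.1 ∧ T₂.tr β' b' s.2 s'.2 ∧
      γ (some a') (some b') = some a ∧ α = α' ⊓ β' ∧ α ≠ ⊥)
  term α s :=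
    ∃ α' β', T₁.term α' s.1 ∧ T₂.term β' s.2 ∧ α = α' ⊓ β' ∧ α ≠ ⊥
  init := (T₁.init, T₂.init)

private lemma sSup_inf_sSup_le_aux {C : Type*} [CompleteBooleanAlgebra C]
    (A B T : Set C) (h : ∀ c ∈ A, ∀ d ∈ B, c ⊓ d ≠ ⊥ → c ⊓ d ∈ T) :
    sSup A ⊓ sSup B ≤ sSup T := by
  rw [sSup_inf_sSup]
  apply iSup_le
  rintro ⟨c, d⟩
  apply iSup_le
  rintro ⟨hc, hd⟩
  by_cases hb : c ⊓ d = ⊥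
  · simp [hb]
  · exact le_sSup (h c hc d hd hb)

/-- Splitting bisimilarity is a congruence with respect to parallel
composition; moreover, the product of witnessing splitting bisimulations is
itself a witnessing splitting bisimulation. -/
theorem sbisim_congr_parComp {C Act S₁ S₂ S₁' S₂' : Type*}
    [CompleteBooleanAlgebra C]
    (γ : Option Act → Option Act → Option Act)
    (hγcomm : ∀ a b, γ a b = γ b a)
    (hγassoc : ∀ a b c, γ (γ a b) c = γ a (γ b c))
    (hγδ : ∀ a, γ none a = none)
    (T₁ : CTS C Act S₁) (T₂ : CTS C Act S₂)
    (T₁' : CTS C Act S₁') (T₂' : CTS C Act S₂')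
    (R₁ : S₁ → S₁' → Prop) (R₂ : S₂ → S₂' → Prop)
    (h₁ : IsSB T₁ T₁' R₁) (h₂ : IsSB T₂ T₂' R₂) :
    IsSB (parComp γ T₁ T₂) (parComp γ T₁' T₂')
      (fun p q => R₁ p.1 q.1 ∧ R₂ p.2 q.2) ∧
    SBisim (parComp γ T₁ T₂) (parComp γ T₁' T₂') := by

  obtain ⟨hi₁, hc₁⟩ := h₁
  obtain ⟨hi₂, hc₂⟩ := h₂
  have main : IsSB (parComp γ T₁ T₂) (parComp γ T₁' T₂')
      (fun p q => R₁ p.1 q.1 ∧ R₂ p.2 q.2) := by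
    refine ⟨⟨hi₁, hi₂⟩, ?_⟩
    rintro ⟨s₁, s₂⟩ ⟨s₁', s₂'⟩ ⟨hr1, hr2⟩
    obtain ⟨f1, b1, ft1, bt1⟩ := hc₁ s₁ s₁' hr1
    obtain ⟨f2, b2, ft2, bt2⟩ := hc₂ s₂ s₂' hr2
    refine ⟨?_, ?_, ?_, ?_⟩
    · -- forward transitions
      rintro α a ⟨t₁, t₂⟩ (⟨ht, heq⟩ | ⟨heq, ht⟩ |
        ⟨α', β', a', b', h1t, h2t, hγ, hα, hne⟩)
      · obtain ⟨CS, hle, hCS⟩ := f1 α a t₁ ht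
        refine ⟨(fun p => (p.1, (p.2, s₂'))) '' CS, ?_, ?_⟩
        · simpa [Set.image_image] using hle
        · rintro p ⟨q, hq, rfl⟩
          obtain ⟨htr', hB⟩ := hCS q hq
          subst heq
          exact ⟨Or.inl ⟨htr', rfl⟩, hB, hr2⟩
      · obtain ⟨CS, hle, hCS⟩ := f2 α a t₂ ht
        refine ⟨(fun p => (p.1, (s₁', p.2))) '' CS, ?_, ?_⟩
        · simpa [Set.image_image] using hle
        · rintro p ⟨q, hq, rfl⟩
          obtain ⟨htr', hB⟩ := hCS q hq
          subst heq
          exact ⟨Or.inr (Or.inl ⟨rfl, htr'⟩), hr1, hB⟩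
      · obtain ⟨CS₁, hle₁, hCS₁⟩ := f1 α' a' t₁ h1t
        obtain ⟨CS₂, hle₂, hCS₂⟩ := f2 β' b' t₂ h2t
        refine ⟨{p | ∃ c u d v, (c, u) ∈ CS₁ ∧ (d, v) ∈ CS₂ ∧ c ⊓ d ≠ ⊥ ∧
            p = (c ⊓ d, (u, v))}, ?_, ?_⟩
        · calc α = α' ⊓ β' := hα
            _ ≤ sSup (Prod.fst '' CS₁) ⊓ sSup (Prod.fst '' CS₂) :=
              inf_le_inf hle₁ hle₂
            _ ≤ _ := by
              apply sSup_inf_sSup_le_aux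
              rintro c ⟨⟨c₀, u⟩, hcu, rfl⟩ d ⟨⟨d₀, v⟩, hdv, rfl⟩ hb
              exact ⟨_, ⟨c₀, u, d₀, v, hcu, hdv, hb, rfl⟩, rfl⟩
        · rintro p ⟨c, u, d, v, hcu, hdv, hb, rfl⟩
          obtain ⟨htr₁, hB₁⟩ := hCS₁ _ hcu
          obtain ⟨htr₂, hB₂⟩ := hCS₂ _ hdv
          exact ⟨Or.inr (Or.inr ⟨c, d, a', b', htr₁, htr₂, hγ, rfl, hb⟩),
            hB₁, hB₂⟩
    · -- backward transitions
      rintro α a ⟨t₁, t₂⟩ (⟨ht, heq⟩ | ⟨heq, ht⟩ |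
        ⟨α', β', a', b', h1t, h2t, hγ, hα, hne⟩)
      · obtain ⟨CS, hle, hCS⟩ := b1 α a t₁ ht
        refine ⟨(fun p => (p.1, (p.2, s₂))) '' CS, ?_, ?_⟩
        · simpa [Set.image_image] using hle
        · rintro p ⟨q, hq, rfl⟩
          obtain ⟨htr', hB⟩ := hCS q hq
          subst heq
          exact ⟨Or.inl ⟨htr', rfl⟩, hB, hr2⟩
      · obtain ⟨CS, hle, hCS⟩ := b2 α a t₂ ht
        refine ⟨(fun p => (p.1, (s₁, p.2))) '' CS, ?_, ?_⟩
        · simpa [Set.image_image] using hle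
        · rintro p ⟨q, hq, rfl⟩
          obtain ⟨htr', hB⟩ := hCS q hq
          subst heq
          exact ⟨Or.inr (Or.inl ⟨rfl, htr'⟩), hr1, hB⟩
      · obtain ⟨CS₁, hle₁, hCS₁⟩ := b1 α' a' t₁ h1t
        obtain ⟨CS₂, hle₂, hCS₂⟩ := b2 β' b' t₂ h2t
        refine ⟨{p | ∃ c u d v, (c, u) ∈ CS₁ ∧ (d, v) ∈ CS₂ ∧ c ⊓ d ≠ ⊥ ∧
            p = (c ⊓ d, (u, v))}, ?_, ?_⟩
        · calc α = α' ⊓ β' := hα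
            _ ≤ sSup (Prod.fst '' CS₁) ⊓ sSup (Prod.fst '' CS₂) :=
              inf_le_inf hle₁ hle₂
            _ ≤ _ := by
              apply sSup_inf_sSup_le_aux
              rintro c ⟨⟨c₀, u⟩, hcu, rfl⟩ d ⟨⟨d₀, v⟩, hdv, rfl⟩ hb
              exact ⟨_, ⟨c₀, u, d₀, v, hcu, hdv, hb, rfl⟩, rfl⟩
        · rintro p ⟨c, u, d, v, hcu, hdv, hb, rfl⟩
          obtain ⟨htr₁, hB₁⟩ := hCS₁ _ hcu
          obtain ⟨htr₂, hB₂⟩ := hCS₂ _ hdv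
          exact ⟨Or.inr (Or.inr ⟨c, d, a', b', htr₁, htr₂, hγ, rfl, hb⟩),
            hB₁, hB₂⟩
    · -- forward termination
      rintro α ⟨α', β', ht1, ht2, hα, hne⟩
      obtain ⟨Cs₁, hle₁, hCs₁⟩ := ft1 α' ht1
      obtain ⟨Cs₂, hle₂, hCs₂⟩ := ft2 β' ht2
      refine ⟨{e | ∃ c ∈ Cs₁, ∃ d ∈ Cs₂, c ⊓ d ≠ ⊥ ∧ e = c ⊓ d}, ?_, ?_⟩
      · calc α = α' ⊓ β' := hα
          _ ≤ sSup Cs₁ ⊓ sSup Cs₂ := inf_le_inf hle₁ hle₂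
          _ ≤ _ := by
            apply sSup_inf_sSup_le_aux
            intro c hc d hd hb
            exact ⟨c, hc, d, hd, hb, rfl⟩
      · rintro e ⟨c, hc, d, hd, hb, rfl⟩
        exact ⟨c, d, hCs₁ c hc, hCs₂ d hd, rfl, hb⟩
    · -- backward termination
      rintro α ⟨α', β', ht1, ht2, hα, hne⟩
      obtain ⟨Cs₁, hle₁, hCs₁⟩ := bt1 α' ht1
      obtain ⟨Cs₂, hle₂, hCs₂⟩ := bt2 β' ht2
      refine ⟨{e | ∃ c ∈ Cs₁, ∃ d ∈ Cs₂, c ⊓ d ≠ ⊥ ∧ e = c ⊓ d}, ?_, ?_⟩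
      · calc α = α' ⊓ β' := hα
          _ ≤ sSup Cs₁ ⊓ sSup Cs₂ := inf_le_inf hle₁ hle₂
          _ ≤ _ := by
            apply sSup_inf_sSup_le_aux
            intro c hc d hd hb
            exact ⟨c, hc, d, hd, hb, rfl⟩
      · rintro e ⟨c, hc, d, hd, hb, rfl⟩
        exact ⟨c, d, hCs₁ c hc, hCs₂ d hd, rfl, hb⟩
  exact ⟨main, _, main⟩
end

section
/- Splitting bisimilarity is a congruence with respect to encapsulation: if T ≈ T', then ∂_H(T) ≈ ∂_H(T') for every set of actions H. -/
/-- Encapsulation `∂_H(T)` (before taking the connected part): all transitions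
labelled with an action in `H` are removed; termination is unchanged. -/
def encap {C Act S : Type*} (H : Set Act) (T : CTS C Act S) :
    CTS C Act S where
  tr α a s s' := a ∉ H ∧ T.tr α a s s'
  term := T.term
  init := T.init

/-- Splitting bisimilarity is a congruence with respect to encapsulation:
if `T ≈ T'` then `∂_H(T) ≈ ∂_H(T')` for every set of actions `H`. -/
theorem sbisim_congr_encap {C Act S S' : Type*} [CompleteBooleanAlgebra C]
    (T : CTS C Act S) (T' : CTS C Act S') (h : SBisim T T') (H : Set Act) :
    SBisim (conn (encap H T)) (conn (encap H T')) := by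
  obtain ⟨B, hinit, hB⟩ := h
  refine ⟨fun s₁ s₂ => B s₁.val s₂.val, hinit, ?_⟩
  intro s₁ s₂ hb
  obtain ⟨f, g, t1, t2⟩ := hB s₁.val s₂.val hb
  refine ⟨?_, ?_, ?_, ?_⟩
  · rintro α a s₁' ⟨haH, htr⟩
    obtain ⟨CS, hle, hCS⟩ := f α a s₁'.val htr
    refine ⟨{q | (q.1, q.2.val) ∈ CS}, ?_, ?_⟩
    · refine hle.trans (sSup_le_sSup ?_)
      rintro c ⟨p, hp, rfl⟩
      have hreach : Reach (encap H T') (encap H T').init p.2 :=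
        s₂.2.tail ⟨p.1, a, haH, (hCS p hp).1⟩
      exact ⟨(p.1, ⟨p.2, hreach⟩), hp, rfl⟩
    · rintro ⟨c, s⟩ hq
      exact ⟨⟨haH, (hCS _ hq).1⟩, (hCS _ hq).2⟩
  · rintro α a s₂' ⟨haH, htr⟩
    obtain ⟨CS, hle, hCS⟩ := g α a s₂'.val htr
    refine ⟨{q | (q.1, q.2.val) ∈ CS}, ?_, ?_⟩
    · refine hle.trans (sSup_le_sSup ?_)
      rintro c ⟨p, hp, rfl⟩
      have hreach : Reach (encap H T) (encap H T).init p.2 :=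
        s₁.2.tail ⟨p.1, a, haH, (hCS p hp).1⟩
      exact ⟨(p.1, ⟨p.2, hreach⟩), hp, rfl⟩
    · rintro ⟨c, s⟩ hq
      exact ⟨⟨haH, (hCS _ hq).1⟩, (hCS _ hq).2⟩
  · exact t1
  · exact t2
end

section
/- From the axioms of ACPε_cr (including R6: a·((↼φ) :→ x) = φ :→ a·x + ¬φ :→ a·δ, and GC1–GC7, A1–A9), the generalized retrospection law R6' is derivable: a·(x ⊲ ↼φ ⊳ y) = (a·x) ⊲ φ ⊳ (a·y). -/
/-- A model of the equational theory ACPε_c restricted to the constants and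
operators of BPA with the empty process, guarded commands, and conditions
forming a Boolean algebra, together with the axioms A1–A9, GC1–GC7 and
BA1–BA8. By Birkhoff's completeness theorem, an equation is derivable from
these axioms iff it holds in every such model. -/
structure ACPecAlg (P : Type*) (C : Type*) where
  add : P → P → P
  seq : P → P → P
  gc : C → P → P
  dead : P
  eps : P
  bot : C
  top : C
  compl : C → C
  join : C → C → C
  meet : C → C → C
  A1 : ∀ x y, add x y = add y x
  A2 : ∀ x y z, add (add x y) z = add x (add y z)
  A3 : ∀ x, add x x = x
  A4 : ∀ x y z, seq (add x y) z = add (seq x z) (seq y z)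
  A5 : ∀ x y z, seq (seq x y) z = seq x (seq y z)
  A6 : ∀ x, add x dead = x
  A7 : ∀ x, seq dead x = dead
  A8 : ∀ x, seq x eps = x
  A9 : ∀ x, seq eps x = x
  GC1 : ∀ x, gc top x = x
  GC2 : ∀ x, gc bot x = dead
  GC3 : ∀ φ, gc φ dead = dead
  GC4 : ∀ φ x y, gc φ (add x y) = add (gc φ x) (gc φ y)
  GC5 : ∀ φ x y, gc φ (seq x y) = seq (gc φ x) y
  GC6 : ∀ φ ψ x, gc φ (gc ψ x) = gc (meet φ ψ) x
  GC7 : ∀ φ ψ x, gc (join φ ψ) x = add (gc φ x) (gc ψ x)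
  BA1 : ∀ φ, join φ bot = φ
  BA2 : ∀ φ, join φ (compl φ) = top
  BA3 : ∀ φ ψ, join φ ψ = join ψ φ
  BA4 : ∀ φ ψ χ, join φ (meet ψ χ) = meet (join φ ψ) (join φ χ)
  BA5 : ∀ φ, meet φ top = φ
  BA6 : ∀ φ, meet φ (compl φ) = bot
  BA7 : ∀ φ ψ, meet φ ψ = meet ψ φ
  BA8 : ∀ φ ψ χ, meet φ (join ψ χ) = join (meet φ ψ) (meet φ χ)

/-- The conditional `p ⊲ φ ⊳ q`, an abbreviation for `φ :→ p + ¬φ :→ q`. -/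
def ACPecAlg.cond {P C : Type*} (A : ACPecAlg P C) (p : P) (φ : C) (q : P) : P :=
  A.add (A.gc φ p) (A.gc (A.compl φ) q)

/-- A model of ACPε_cr: a model of ACPε_c together with a retrospection
operator on conditions satisfying R1–R5. -/
structure ACPecrAlg (P : Type*) (C : Type*) extends ACPecAlg P C where
  retro : C → C
  R1 : retro bot = bot
  R2 : retro top = top
  R3 : ∀ φ, retro (compl φ) = compl (retro φ)
  R4 : ∀ φ ψ, retro (join φ ψ) = join (retro φ) (retro ψ)
  R5 : ∀ φ ψ, retro (meet φ ψ) = meet (retro φ) (retro ψ)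

namespace ACPecAlg

variable {P C : Type*} (A : ACPecAlg P C)

lemma meet_idem (φ : C) : A.meet φ φ = φ := by
  have h1 : A.meet φ φ = A.join (A.meet φ φ) A.bot := (A.BA1 _).symm
  rw [h1, ← A.BA6 φ, ← A.BA8, A.BA2, A.BA5]

lemma absorb_left (φ : C) (p q : P) :
    A.gc φ (A.add (A.gc φ p) (A.gc (A.compl φ) q)) = A.gc φ p := by
  rw [A.GC4, A.GC6, A.GC6, meet_idem, A.BA6, A.GC2, A.A6]

lemma absorb_right (φ : C) (p q : P) :
    A.gc (A.compl φ) (A.add (A.gc φ p) (A.gc (A.compl φ) q))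
      = A.gc (A.compl φ) q := by
  rw [A.GC4, A.GC6, A.GC6, meet_idem, A.BA7, A.BA6, A.GC2, A.A1, A.A6]

end ACPecAlg

/-- From the axioms of ACPε_cr — in particular axiom R6
`a·((↼φ) :→ x) = φ :→ a·x + ¬φ :→ a·δ`, which holds for every constant
`a ∈ Act ∪ {δ}` — the generalized retrospection law R6' is derivable:
`a·(x ⊲ ↼φ ⊳ y) = (a·x) ⊲ φ ⊳ (a·y)`. -/
theorem acpecr_R6' {P C : Type*} (A : ACPecrAlg P C) (a : P)
    (R6 : ∀ φ x, A.seq a (A.gc (A.retro φ) x) =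
      A.add (A.gc φ (A.seq a x)) (A.gc (A.compl φ) (A.seq a A.dead)))
    (φ : C) (x y : P) :
    A.seq a (A.cond x (A.retro φ) y) =
      A.cond (A.seq a x) φ (A.seq a y) := by
  set B := A.toACPecAlg with hB
  set ψ := A.retro φ with hψ
  set z := B.cond x ψ y with hz
  -- ψ :→ z = ψ :→ x  and  ¬ψ :→ z = ¬ψ :→ y
  have hz1 : B.gc ψ z = B.gc ψ x := B.absorb_left ψ x y
  have hz2 : B.gc (B.compl ψ) z = B.gc (B.compl ψ) y := B.absorb_right ψ x y
  -- instances of R6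
  have h1 := R6 φ z
  have h1' := R6 φ x
  have h2 := R6 (A.compl φ) z
  have h2' := R6 (A.compl φ) y
  rw [A.R3] at h2 h2'
  rw [hz1] at h1
  rw [hz2] at h2
  -- φ :→ a·z = φ :→ a·x
  have e1 : B.gc φ (B.seq a z) = B.gc φ (B.seq a x) := by
    have := congrArg (B.gc φ) (h1.symm.trans h1')
    rwa [B.absorb_left, B.absorb_left] at this
  -- ¬φ :→ a·z = ¬φ :→ a·y
  have e2 : B.gc (B.compl φ) (B.seq a z) = B.gc (B.compl φ) (B.seq a y) := by
    have := congrArg (B.gc (B.compl φ)) (h2.symm.trans h2')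
    rwa [B.absorb_left, B.absorb_left] at this
  calc B.seq a z = B.gc B.top (B.seq a z) := (B.GC1 _).symm
    _ = B.gc (B.join φ (B.compl φ)) (B.seq a z) := by rw [B.BA2]
    _ = B.add (B.gc φ (B.seq a z)) (B.gc (B.compl φ) (B.seq a z)) := B.GC7 _ _ _
    _ = B.cond (B.seq a x) φ (B.seq a y) := by rw [e1, e2]; rfl
end

section
/- From the axioms of BPA with the empty process, guarded commands, retrospection, and last action conditions (in particular axiom J: a·x = a·(just_a :→ x), axiom A4, and R6'), the equation a·x + b·y = (a + b)·(just_a :→ x + just_b :→ y) is derivable for distinct actions a, b. -/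
/-- From the axioms of BPA with the empty process, guarded commands,
retrospection and last action conditions — in particular axiom J
(`a·x = a·(just_a :→ x)`), axiom A4, and the derived law R6' — the equation
`a·x + b·y = (a + b)·(just_a :→ x + just_b :→ y)` is derivable for distinct
actions `a`, `b` (whose last action conditions are incompatible:
`just_a ∧ just_b = ⊥`). -/
theorem acpecr_last_action {P C : Type*} (A : ACPecrAlg P C)
    (a b : P) (justa justb : C)
    (hab : a ≠ b)
    (hincomp : A.meet justa justb = A.bot)
    (Ja : ∀ x, A.seq a x = A.seq a (A.gc justa x))
    (Jb : ∀ x, A.seq b x = A.seq b (A.gc justb x))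
    (R6'a : ∀ φ x y, A.seq a (A.cond x (A.retro φ) y) =
      A.cond (A.seq a x) φ (A.seq a y))
    (R6'b : ∀ φ x y, A.seq b (A.cond x (A.retro φ) y) =
      A.cond (A.seq b x) φ (A.seq b y))
    (x y : P) :
    A.add (A.seq a x) (A.seq b y) =
      A.seq (A.add a b) (A.add (A.gc justa x) (A.gc justb y)) := by
  have idem : ∀ φ, A.meet φ φ = φ := by
    intro φ
    have h1 := A.BA5 φ
    rw [← A.BA2 φ, A.BA8, A.BA6, A.BA1] at h1
    exact h1
  set U := A.add (A.gc justa x) (A.gc justb y) with hU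
  have hA : A.gc justa U = A.gc justa x := by
    rw [hU, A.GC4, A.GC6, A.GC6, idem, hincomp, A.GC2, A.A6]
  have hB : A.gc justb U = A.gc justb y := by
    rw [hU, A.GC4, A.GC6, A.GC6, idem, A.BA7, hincomp, A.GC2, A.A1, A.A6]
  rw [A.A4, Ja U, Jb U, hA, hB, ← Ja, ← Jb]
end

section
/- Signal-observing splitting bisimilarity is an equivalence relation on conditional transition systems with signals. -/
/-- A conditional transition system with signals: each state emits a signal
(a condition), no transition starts or ends in a state with signal `⊥`, and no
state with signal `⊥` terminates. -/
structure SCTS (C : Type*) [CompleteBooleanAlgebra C] (Act : Type*)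
    (S : Type*) extends CTS C Act S where
  sg : S → C
  tr_src : ∀ α a s s', tr α a s s' → sg s ≠ ⊥
  tr_tgt : ∀ α a s s', tr α a s s' → sg s' ≠ ⊥
  term_sg : ∀ α s, term α s → sg s ≠ ⊥

/-- `B` is a signal-observing splitting bisimulation between `T₁` and `T₂`. -/
def IsSOSB {C Act S₁ S₂ : Type*} [CompleteBooleanAlgebra C]
    (T₁ : SCTS C Act S₁) (T₂ : SCTS C Act S₂) (B : S₁ → S₂ → Prop) : Prop :=
  B T₁.init T₂.init ∧
  ∀ s₁ s₂, B s₁ s₂ →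
    T₁.sg s₁ = T₂.sg s₂ ∧
    (∀ α a s₁', T₁.tr α a s₁ s₁' → ∃ CS : Set (C × S₂),
      T₁.sg s₁ ⊓ α ≤ sSup (Prod.fst '' CS) ∧
      ∀ p ∈ CS, T₂.tr p.1 a s₂ p.2 ∧ B s₁' p.2) ∧
    (∀ α a s₂', T₂.tr α a s₂ s₂' → ∃ CS : Set (C × S₁),
      T₂.sg s₂ ⊓ α ≤ sSup (Prod.fst '' CS) ∧
      ∀ p ∈ CS, T₁.tr p.1 a s₁ p.2 ∧ B p.2 s₂') ∧
    (∀ α, T₁.term α s₁ → ∃ Cs : Set C,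
      T₁.sg s₁ ⊓ α ≤ sSup Cs ∧ ∀ α' ∈ Cs, T₂.term α' s₂) ∧
    (∀ α, T₂.term α s₂ → ∃ Cs : Set C,
      T₂.sg s₂ ⊓ α ≤ sSup Cs ∧ ∀ α' ∈ Cs, T₁.term α' s₁)

/-- Two conditional transition systems with signals are signal-observing
splitting bisimilar if such a bisimulation exists. -/
def SOBisim {C Act S₁ S₂ : Type*} [CompleteBooleanAlgebra C]
    (T₁ : SCTS C Act S₁) (T₂ : SCTS C Act S₂) : Prop :=
  ∃ B, IsSOSB T₁ T₂ B

lemma isSOSB_refl {C Act S : Type*} [CompleteBooleanAlgebra C]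
    (T : SCTS C Act S) : IsSOSB T T (· = ·) := by
  refine ⟨rfl, ?_⟩
  rintro s₁ s₂ rfl
  refine ⟨rfl, ?_, ?_, ?_, ?_⟩
  · intro α a s' h
    exact ⟨{(α, s')}, by simp, by rintro p hp; simp at hp; subst hp; exact ⟨h, rfl⟩⟩
  · intro α a s' h
    exact ⟨{(α, s')}, by simp, by rintro p hp; simp at hp; subst hp; exact ⟨h, rfl⟩⟩
  · intro α h
    exact ⟨{α}, by simp, by rintro α' hα'; simp at hα'; subst hα'; exact h⟩
  · intro α h
    exact ⟨{α}, by simp, by rintro α' hα'; simp at hα'; subst hα'; exact h⟩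

lemma isSOSB_symm {C Act S₁ S₂ : Type*} [CompleteBooleanAlgebra C]
    {T₁ : SCTS C Act S₁} {T₂ : SCTS C Act S₂} {B : S₁ → S₂ → Prop}
    (h : IsSOSB T₁ T₂ B) : IsSOSB T₂ T₁ (fun a b => B b a) := by
  obtain ⟨hinit, h⟩ := h
  refine ⟨hinit, fun s₂ s₁ hB => ?_⟩
  obtain ⟨hsg, h1, h2, h3, h4⟩ := h s₁ s₂ hB
  exact ⟨hsg.symm, h2, h1, h4, h3⟩

lemma isSOSB_comp {C Act S₁ S₂ S₃ : Type*} [CompleteBooleanAlgebra C]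
    {T₁ : SCTS C Act S₁} {T₂ : SCTS C Act S₂} {T₃ : SCTS C Act S₃}
    {B : S₁ → S₂ → Prop} {B' : S₂ → S₃ → Prop}
    (h : IsSOSB T₁ T₂ B) (h' : IsSOSB T₂ T₃ B') :
    IsSOSB T₁ T₃ (fun a c => ∃ b, B a b ∧ B' b c) := by
  obtain ⟨hinit, h⟩ := h
  obtain ⟨hinit', h'⟩ := h'
  refine ⟨⟨T₂.init, hinit, hinit'⟩, ?_⟩
  rintro s₁ s₃ ⟨s₂, hB, hB'⟩
  obtain ⟨hsg, h1, h2, h3, h4⟩ := h s₁ s₂ hB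
  obtain ⟨hsg', h1', h2', h3', h4'⟩ := h' s₂ s₃ hB'
  refine ⟨hsg.trans hsg', ?_, ?_, ?_, ?_⟩
  · intro α a s₁' htr
    obtain ⟨CS, hle, hCS⟩ := h1 α a s₁' htr
    have hF : ∀ p ∈ CS, ∃ CS' : Set (C × S₃),
        T₂.sg s₂ ⊓ p.1 ≤ sSup (Prod.fst '' CS') ∧
        ∀ q ∈ CS', T₃.tr q.1 a s₃ q.2 ∧ B' p.2 q.2 := by
      intro p hp
      exact h1' p.1 a p.2 (hCS p hp).1
    choose F hF1 hF2 using hF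
    refine ⟨⋃ p, ⋃ (hp : p ∈ CS), F p hp, ?_, ?_⟩
    · calc T₁.sg s₁ ⊓ α = T₁.sg s₁ ⊓ (T₁.sg s₁ ⊓ α) := by rw [← inf_assoc, inf_idem]
        _ ≤ T₁.sg s₁ ⊓ sSup (Prod.fst '' CS) := inf_le_inf_left _ hle
        _ = ⨆ b ∈ Prod.fst '' CS, T₁.sg s₁ ⊓ b := inf_sSup_eq
        _ ≤ _ := by
            refine iSup₂_le ?_
            rintro b ⟨p, hp, rfl⟩
            calc T₁.sg s₁ ⊓ p.1 = T₂.sg s₂ ⊓ p.1 := by rw [hsg]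
              _ ≤ sSup (Prod.fst '' F p hp) := hF1 p hp
              _ ≤ _ := sSup_le_sSup (Set.image_mono (by
                  intro q hq
                  exact Set.mem_iUnion.2 ⟨p, Set.mem_iUnion.2 ⟨hp, hq⟩⟩))
    · intro q hq
      obtain ⟨p, hpq⟩ := Set.mem_iUnion.1 hq
      obtain ⟨hp, hq'⟩ := Set.mem_iUnion.1 hpq
      exact ⟨(hF2 p hp q hq').1, p.2, (hCS p hp).2, (hF2 p hp q hq').2⟩
  · intro α a s₃' htr
    obtain ⟨CS, hle, hCS⟩ := h2' α a s₃' htr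
    have hF : ∀ p ∈ CS, ∃ CS' : Set (C × S₁),
        T₂.sg s₂ ⊓ p.1 ≤ sSup (Prod.fst '' CS') ∧
        ∀ q ∈ CS', T₁.tr q.1 a s₁ q.2 ∧ B q.2 p.2 := by
      intro p hp
      exact h2 p.1 a p.2 (hCS p hp).1
    choose F hF1 hF2 using hF
    refine ⟨⋃ p, ⋃ (hp : p ∈ CS), F p hp, ?_, ?_⟩
    · calc T₃.sg s₃ ⊓ α = T₃.sg s₃ ⊓ (T₃.sg s₃ ⊓ α) := by rw [← inf_assoc, inf_idem]
        _ ≤ T₃.sg s₃ ⊓ sSup (Prod.fst '' CS) := inf_le_inf_left _ hle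
        _ = ⨆ b ∈ Prod.fst '' CS, T₃.sg s₃ ⊓ b := inf_sSup_eq
        _ ≤ _ := by
            refine iSup₂_le ?_
            rintro b ⟨p, hp, rfl⟩
            calc T₃.sg s₃ ⊓ p.1 = T₂.sg s₂ ⊓ p.1 := by rw [hsg']
              _ ≤ sSup (Prod.fst '' F p hp) := hF1 p hp
              _ ≤ _ := sSup_le_sSup (Set.image_mono (by
                  intro q hq
                  exact Set.mem_iUnion.2 ⟨p, Set.mem_iUnion.2 ⟨hp, hq⟩⟩))
    · intro q hq
      obtain ⟨p, hpq⟩ := Set.mem_iUnion.1 hq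
      obtain ⟨hp, hq'⟩ := Set.mem_iUnion.1 hpq
      exact ⟨(hF2 p hp q hq').1, p.2, (hF2 p hp q hq').2, (hCS p hp).2⟩
  · intro α hterm
    obtain ⟨Cs, hle, hCs⟩ := h3 α hterm
    have hF : ∀ β ∈ Cs, ∃ Cs' : Set C,
        T₂.sg s₂ ⊓ β ≤ sSup Cs' ∧ ∀ α' ∈ Cs', T₃.term α' s₃ := by
      intro β hβ
      exact h3' β (hCs β hβ)
    choose F hF1 hF2 using hF
    refine ⟨⋃ β, ⋃ (hβ : β ∈ Cs), F β hβ, ?_, ?_⟩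
    · calc T₁.sg s₁ ⊓ α = T₁.sg s₁ ⊓ (T₁.sg s₁ ⊓ α) := by rw [← inf_assoc, inf_idem]
        _ ≤ T₁.sg s₁ ⊓ sSup Cs := inf_le_inf_left _ hle
        _ = ⨆ b ∈ Cs, T₁.sg s₁ ⊓ b := inf_sSup_eq
        _ ≤ _ := by
            refine iSup₂_le fun β hβ => ?_
            calc T₁.sg s₁ ⊓ β = T₂.sg s₂ ⊓ β := by rw [hsg]
              _ ≤ sSup (F β hβ) := hF1 β hβ
              _ ≤ _ := sSup_le_sSup (by
                  intro γ hγ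
                  exact Set.mem_iUnion.2 ⟨β, Set.mem_iUnion.2 ⟨hβ, hγ⟩⟩)
    · intro γ hγ
      obtain ⟨β, hβγ⟩ := Set.mem_iUnion.1 hγ
      obtain ⟨hβ, hγ'⟩ := Set.mem_iUnion.1 hβγ
      exact hF2 β hβ γ hγ'
  · intro α hterm
    obtain ⟨Cs, hle, hCs⟩ := h4' α hterm
    have hF : ∀ β ∈ Cs, ∃ Cs' : Set C,
        T₂.sg s₂ ⊓ β ≤ sSup Cs' ∧ ∀ α' ∈ Cs', T₁.term α' s₁ := by
      intro β hβ
      exact h4 β (hCs β hβ)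
    choose F hF1 hF2 using hF
    refine ⟨⋃ β, ⋃ (hβ : β ∈ Cs), F β hβ, ?_, ?_⟩
    · calc T₃.sg s₃ ⊓ α = T₃.sg s₃ ⊓ (T₃.sg s₃ ⊓ α) := by rw [← inf_assoc, inf_idem]
        _ ≤ T₃.sg s₃ ⊓ sSup Cs := inf_le_inf_left _ hle
        _ = ⨆ b ∈ Cs, T₃.sg s₃ ⊓ b := inf_sSup_eq
        _ ≤ _ := by
            refine iSup₂_le fun β hβ => ?_
            calc T₃.sg s₃ ⊓ β = T₂.sg s₂ ⊓ β := by rw [hsg']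
              _ ≤ sSup (F β hβ) := hF1 β hβ
              _ ≤ _ := sSup_le_sSup (by
                  intro γ hγ
                  exact Set.mem_iUnion.2 ⟨β, Set.mem_iUnion.2 ⟨hβ, hγ⟩⟩)
    · intro γ hγ
      obtain ⟨β, hβγ⟩ := Set.mem_iUnion.1 hγ
      obtain ⟨hβ, hγ'⟩ := Set.mem_iUnion.1 hβγ
      exact hF2 β hβ γ hγ'

/-- Signal-observing splitting bisimilarity is an equivalence relation on
conditional transition systems with signals. -/
theorem sobisim_equivalence (C Act S : Type*) [CompleteBooleanAlgebra C] :
    Equivalence (fun T₁ T₂ : SCTS C Act S => SOBisim T₁ T₂) := by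
  constructor
  · intro T
    exact ⟨_, isSOSB_refl T⟩
  · rintro T₁ T₂ ⟨B, hB⟩
    exact ⟨_, isSOSB_symm hB⟩
  · rintro T₁ T₂ T₃ ⟨B, hB⟩ ⟨B', hB'⟩
    exact ⟨_, isSOSB_comp hB hB'⟩
end

section
/- For the unfolding of a conditional transition system: the unfolding unf(T) of T is a conditional transition system isomorphic in behaviour to T, i.e., T and unf(T) are splitting bisimilar, with the relation relating each path to the state it ends in being a witnessing splitting bisimulation. -/
/-- `IsPath T l s` holds iff the alternating sequence consisting of the
state–label pairs in `l` followed by the final state `s` is a path of `T`: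
it starts in the initial state and consecutive states are connected by
transitions with the recorded labels. -/
inductive IsPath {C Act S : Type*} (T : CTS C Act S) :
    List (S × C × Act) → S → Prop
  | nil : IsPath T [] T.init
  | snoc {l : List (S × C × Act)} {s s' : S} {α : C} {a : Act} :
      IsPath T l s → T.tr α a s s' → IsPath T (l ++ [(s, α, a)]) s'

/-- The unfolding `unf T` of `T`: its states are the paths of `T`, its initial
state is the path `⟨s⁰⟩`, a path `π⌢⟨s⟩` has a transition labelled `(α, a)` to
`π⌢⟨s,(α,a),s'⟩` whenever `s →^{α,a} s'` in `T`, and `π⌢⟨s⟩` terminates under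
`α` whenever `s ↓^α` in `T`. -/
def unf {C Act S : Type*} (T : CTS C Act S) :
    CTS C Act {p : List (S × C × Act) × S // IsPath T p.1 p.2} where
  tr α a p q :=
    q.val.1 = p.val.1 ++ [(p.val.2, α, a)] ∧ T.tr α a p.val.2 q.val.2
  term α p := T.term α p.val.2
  init := ⟨([], T.init), IsPath.nil⟩

/-- `T` and its unfolding `unf T` are splitting bisimilar; moreover, the
relation relating each path to the state it ends in is a witnessing splitting
bisimulation. -/
theorem sbisim_unf {C Act S : Type*} [CompleteBooleanAlgebra C]
    (T : CTS C Act S) :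
    IsSB (unf T) T (fun p s => p.val.2 = s) ∧ SBisim T (unf T) := by
  have key : IsSB (unf T) T (fun p s => p.val.2 = s) := by
    refine ⟨rfl, ?_⟩
    rintro p s hps
    refine ⟨?_, ?_, ?_, ?_⟩
    · rintro α a p' ⟨_, htr⟩
      refine ⟨{(α, p'.val.2)}, ?_, ?_⟩
      · simp
      · rintro q hq
        simp only [Set.mem_singleton_iff] at hq
        subst hq hps
        exact ⟨htr, rfl⟩
    · rintro α a s' htr
      subst hps
      refine ⟨{(α, ⟨(p.val.1 ++ [(p.val.2, α, a)], s'),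
        IsPath.snoc p.property htr⟩)}, ?_, ?_⟩
      · simp
      · rintro q hq
        simp only [Set.mem_singleton_iff] at hq
        subst hq
        exact ⟨⟨rfl, htr⟩, rfl⟩
    · rintro α ht
      exact ⟨{α}, by simp, by rintro β hb; simp at hb; subst hb hps; exact ht⟩
    · rintro α ht
      refine ⟨{α}, by simp, ?_⟩
      rintro β hb; simp at hb; subst hb hps
      exact ht
  refine ⟨key, ⟨fun s p => p.val.2 = s, rfl, ?_⟩⟩
  rintro s p hps
  obtain ⟨h0, h1⟩ := key
  obtain ⟨k1, k2, k3, k4⟩ := h1 p s hps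
  exact ⟨k2, k1, k4, k3⟩
end
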